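/- In the category of abelian groups, the inclusion ℤ ⟶ ℚ (the canonical ring-theoretic coercion, viewed as a morphism of abelian groups) is a pullback stable essential monomorphism which is not an isomorphism. (Hence the category of abelian groups is balanced but does not satisfy the condition that every pullback stable essential monomorphism is an isomorphism.) -/

import Mathlib

open CategoryTheory Limits

/-- A morphism `m` is an essential monomorphism if it is a monomorphism and every
morphism `f` such that `m ≫ f` is a monomorphism is itself a monomorphism. -/
def IsEssentialMono {C : Type*} [CategoryTheory.Category C] {S A : C} (m : S ⟶ A) : Prop :=
  CategoryTheory.Mono m ∧
    ∀ ⦃B : C⦄ (f : A ⟶ B), CategoryTheory.Mono (m ≫ f) → CategoryTheory.Mono f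

/-- A morphism `m : S ⟶ A` is a pullback stable essential monomorphism if for every
morphism `u : X ⟶ A` the pullback projection `S ×_A X ⟶ X` of `m` along `u` is an
essential monomorphism. -/
def IsStableEssentialMono {C : Type*} [CategoryTheory.Category C]
    [CategoryTheory.Limits.HasPullbacks C] {S A : C} (m : S ⟶ A) : Prop :=
  ∀ ⦃X : C⦄ (u : X ⟶ A), IsEssentialMono (CategoryTheory.Limits.pullback.snd m u)

/-- In the category of abelian groups, the canonical inclusion `ℤ ⟶ ℚ` is a pullback
stable essential monomorphism which is not an isomorphism. -/
theorem intToRat_stableEssentialMono_not_isIso :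
    IsStableEssentialMono (AddCommGrpCat.ofHom (Int.castAddHom ℚ)) ∧
      ¬ IsIso (AddCommGrpCat.ofHom (Int.castAddHom ℚ)) := by
  have hmono : Mono (AddCommGrpCat.ofHom (Int.castAddHom ℚ)) := by
    rw [AddCommGrpCat.mono_iff_injective]
    intro a b h
    exact_mod_cast Int.cast_injective (α := ℚ) h
  constructor
  · intro X u
    refine ⟨inferInstance, fun B f hf => ?_⟩
    rw [AddCommGrpCat.mono_iff_injective] at hf ⊢
    rw [injective_iff_map_eq_zero]
    intro x hx
    have key : ∀ y : X, (∃ n : ℤ, (n : ℚ) = u y) → f y = 0 → y = 0 := by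
      rintro y ⟨n, hn⟩ hy
      let g1 : AddCommGrpCat.of ℤ ⟶ AddCommGrpCat.of ℤ := AddCommGrpCat.ofHom (zmultiplesHom ℤ n)
      let g2 : AddCommGrpCat.of ℤ ⟶ X := AddCommGrpCat.ofHom ((zmultiplesHom X) y)
      have hcomm : g1 ≫ AddCommGrpCat.ofHom (Int.castAddHom ℚ) = g2 ≫ u := by
        ext1
        show ((zmultiplesHom ℤ n) (1:ℤ) : ℚ) = u ((zmultiplesHom X y) (1:ℤ))
        simp [hn]
      let ℓ : AddCommGrpCat.of ℤ ⟶ pullback (AddCommGrpCat.ofHom (Int.castAddHom ℚ)) u :=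
        pullback.lift g1 g2 hcomm
      have hℓ : ℓ ≫ pullback.snd _ u = g2 := pullback.lift_snd _ _ _
      have h1 : (pullback.snd (AddCommGrpCat.ofHom (Int.castAddHom ℚ)) u) (ℓ (1:ℤ)) = y := by
        have h := ConcreteCategory.congr_hom hℓ (1:ℤ)
        exact h.trans (one_zsmul y)
      have h0 : (pullback.snd (AddCommGrpCat.ofHom (Int.castAddHom ℚ)) u ≫ f) (ℓ (1:ℤ))
          = (pullback.snd (AddCommGrpCat.ofHom (Int.castAddHom ℚ)) u ≫ f) 0 := by
        show f ((pullback.snd (AddCommGrpCat.ofHom (Int.castAddHom ℚ)) u) (ℓ (1:ℤ)))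
            = f ((pullback.snd (AddCommGrpCat.ofHom (Int.castAddHom ℚ)) u) 0)
        rw [h1, map_zero, map_zero, hy]
      have h2 := hf h0
      rw [← h1, h2, map_zero]
    obtain ⟨q, hq⟩ : ∃ q : ℚ, q = u x := ⟨u x, rfl⟩
    have hux : u ((q.den : ℤ) • x) = (q.num : ℚ) := by
      rw [map_zsmul, ← hq]
      show (q.den : ℤ) • q = (q.num : ℚ)
      rw [zsmul_eq_mul]
      push_cast
      rw [mul_comm]
      exact_mod_cast Rat.mul_den_eq_num q
    have hden : ((q.den : ℤ) • x) = 0 := by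
      apply key
      · exact ⟨q.num, hux.symm⟩
      · rw [map_zsmul, hx, smul_zero]
    have huq : q = 0 := by
      have h3 : (q.num : ℚ) = 0 := by rw [← hux, hden, map_zero]
      have h4 : q.num = 0 := by exact_mod_cast h3
      exact Rat.zero_iff_num_zero.mpr h4
    exact key x ⟨0, by rw [← hq, huq]; simp⟩ hx
  · intro h
    have hgi : CategoryTheory.inv (AddCommGrpCat.ofHom (Int.castAddHom ℚ)) ≫
        AddCommGrpCat.ofHom (Int.castAddHom ℚ) = 𝟙 _ := IsIso.inv_hom_id _
    have h2 := ConcreteCategory.congr_hom hgi ((1:ℚ)/2)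
    obtain ⟨n, hn⟩ : ∃ n : ℤ, (n : ℚ) = (1:ℚ)/2 :=
      ⟨CategoryTheory.inv (AddCommGrpCat.ofHom (Int.castAddHom ℚ)) ((1:ℚ)/2), h2⟩
    have hden := congrArg Rat.den hn
    rw [Rat.den_intCast] at hden
    norm_num at hden
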